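/- Every second-order two-stage diagonally implicit Runge–Kutta method has SSP coefficient r ≤ 4; equivalently, if r > 0, A ∈ ℝ^{2×2} is lower triangular, b ∈ ℝ^2 satisfy b^T e = 1, b^T A e = 1/2, and the absolute monotonicity conditions (I+rA invertible, (I+rA)^{-1} e ≥ 0, rA(I+rA)^{-1} ≥ 0, b^T(I+rA)^{-1} ≥ 0, 1 - r b^T (I+rA)^{-1} e ≥ 0), then r ≤ 4. -/

import Mathlib

open Matrix

lemma key_ssp (u v t r : ℝ) (hu : 1 ≤ u) (hv : 1 ≤ v) (ht0 : 0 ≤ t) (ht1 : t ≤ 1)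
    (hr : 0 < r)
    (P1 : (1-t)*u + t*v ≤ 1 + r/2)
    (P2 : 1 + r/2 ≤ u + t*v)
    (P3 : 1 + r/2 ≤ (1-t)*u + v)
    (P4 : r*(u + v - 1 - r/2) ≤ u*v) : r ≤ 4 := by
  by_contra h
  push_neg at h
  rcases le_or_gt r u with hru | hur
  · nlinarith [mul_nonneg (sub_nonneg.2 ht1) (sub_nonneg.2 hru), mul_nonneg ht0 (sub_nonneg.2 hv)]
  · have hvr : v < r := by nlinarith [mul_pos (sub_pos.2 hur) (sub_pos.2 hur)]
    have hQ : (u+v)*(1+r/2) ≤ u^2+u*v+v^2 := by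
      nlinarith [mul_le_mul_of_nonneg_left P2 (by linarith : (0:ℝ) ≤ u), mul_le_mul_of_nonneg_left P3 (by linarith : (0:ℝ) ≤ v)]
    set s := u + v with hs
    have hR : 0 ≤ (s - r)*(s - 1 - r/2) := by nlinarith
    rcases le_or_gt s (1 + r/2) with hcase | hcase
    · have hs2 : (2:ℝ) ≤ s := by simp only [hs]; linarith
      nlinarith [mul_nonneg (sub_nonneg.2 hs2) (sub_nonneg.2 hcase), mul_nonneg (sub_nonneg.2 hu) (sub_nonneg.2 hv)]
    · have hsr2 : s ≥ r := by
        rcases le_or_gt r s with h'|h'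
        · exact h'
        · nlinarith
      have hs2r : s < 2*r := by simp only [hs]; linarith
      have huv : u*v ≤ s^2/4 := by nlinarith [sq_nonneg (u-v)]
      have hT : r*(s - 1 - r/2) ≤ s^2/4 := le_trans P4 huv
      have hM : 0 ≤ (s-r)*(2*r-s) := mul_nonneg (by linarith) (by linarith)
      have hP : 0 < r*(s-4) := mul_pos hr (by linarith)
      clear P1 P2 P3 P4 hQ hR huv hu hv ht0 ht1 hcase
      nlinarith [hM, hP, hT]

set_option maxHeartbeats 1000000 in
theorem stmt_10 (A : Matrix (Fin 2) (Fin 2) ℝ) (b : Fin 2 → ℝ) (r : ℝ)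
    (hr : 0 < r)
    (hlow : ∀ i j, i < j → A i j = 0)
    (hoc1 : b ⬝ᵥ (fun _ => (1 : ℝ)) = 1)
    (hoc2 : b ⬝ᵥ A.mulVec (fun _ => (1 : ℝ)) = 1 / 2)
    (hN : IsUnit (1 + r • A).det)
    (ham1 : ∀ i, 0 ≤ (1 + r • A)⁻¹.mulVec (fun _ => (1 : ℝ)) i)
    (ham2 : ∀ i j, 0 ≤ ((r • A) * (1 + r • A)⁻¹) i j)
    (ham3 : ∀ i, 0 ≤ ((1 + r • A)⁻¹ᵀ.mulVec b) i)
    (ham4 : 0 ≤ 1 - r * (b ⬝ᵥ (1 + r • A)⁻¹.mulVec (fun _ => (1 : ℝ)))) :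
    r ≤ 4 := by
  have hA01 : A 0 1 = 0 := hlow 0 1 (by decide)
  set a := A 0 0 with ha
  set c := A 1 0 with hc
  set d := A 1 1 with hd
  set u := 1 + r * a with hu
  set v := 1 + r * d with hv
  -- entries of M
  have hM00 : (1 + r • A) 0 0 = u := by
    simp [Matrix.add_apply, Matrix.smul_apply, Matrix.one_apply, hu, ha]
  have hM01 : (1 + r • A) 0 1 = 0 := by
    simp [Matrix.add_apply, Matrix.smul_apply, Matrix.one_apply, hA01]
  have hM10 : (1 + r • A) 1 0 = r * c := by
    simp [Matrix.add_apply, Matrix.smul_apply, Matrix.one_apply, hc]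
  have hM11 : (1 + r • A) 1 1 = v := by
    simp [Matrix.add_apply, Matrix.smul_apply, Matrix.one_apply, hv, hd]
  have hdet : (1 + r • A).det = u * v := by
    rw [Matrix.det_fin_two, hM00, hM01, hM10, hM11]; ring
  have hDne : u * v ≠ 0 := by
    rw [← hdet]; exact hN.ne_zero
  have hune : u ≠ 0 := fun h => hDne (by rw [h]; ring)
  have hvne : v ≠ 0 := fun h => hDne (by rw [h]; ring)
  -- inverse entries
  have hinv : (1 + r • A)⁻¹ = (u*v)⁻¹ • !![v, 0; -(r*c), u] := by
    rw [Matrix.inv_def, Matrix.adjugate_fin_two, hdet, hM00, hM01, hM10, hM11]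
    norm_num [mul_inv, mul_comm]
  have e10 := ham1 0
  have e11 := ham1 1
  have e200 := ham2 0 0
  have e210 := ham2 1 0
  have e211 := ham2 1 1
  have e30 := ham3 0
  have e31 := ham3 1
  simp [hinv, Matrix.mulVec, dotProduct, Fin.sum_univ_two, Matrix.mul_apply,
    Matrix.smul_apply, Matrix.transpose_apply, Matrix.add_apply, Matrix.one_apply,
    hA01, ← ha, ← hc, ← hd] at e10 e11 e200 e210 e211 e30 e31 ham4 hoc1 hoc2
  clear ham1 ham2 ham3 hN hlow hinv hdet hM00 hM01 hM10 hM11 hA01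
  clear_value a c d u v
  -- u > 0
  have hupos : 0 < u := by
    rcases lt_or_gt_of_ne hune with h | h
    · exfalso
      have h1 : u⁻¹ < 0 := inv_lt_zero.2 h
      have h2 : 0 < v⁻¹ * v := by rw [inv_mul_cancel₀ hvne]; norm_num
      nlinarith [e10, mul_neg_of_neg_of_pos h1 h2]
    · exact h
  -- 0 ≤ (uv)⁻¹ * (rc)
  have hrd : r * d = v - 1 := by rw [hv]; ring
  rw [hrd] at e210
  have e210' : 0 ≤ v⁻¹ * u⁻¹ * (r * c) := by linarith [e210]
  rcases lt_or_gt_of_ne hvne with hvneg | hvpos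
  · -- v < 0 : contradiction
    exfalso
    have h1 : v⁻¹ < 0 := inv_lt_zero.2 hvneg
    have h2 : 0 < u⁻¹ * u := by rw [inv_mul_cancel₀ hune]; norm_num
    linarith [e11, e210', mul_neg_of_neg_of_pos h1 h2]
  · -- v > 0
    have hDpos : 0 < u * v := mul_pos hupos hvpos
    have hquv : v⁻¹ * u⁻¹ * (u * v) = 1 := by field_simp
    have F3 : 0 ≤ r * c := by
      have g : 0 ≤ (r * c) * (v⁻¹ * u⁻¹ * (u * v)) := by nlinarith [e210', hDpos]
      rwa [hquv, mul_one] at g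
    have F4 : r * c ≤ u := by
      have g : 0 ≤ (u - r * c) * (v⁻¹ * u⁻¹ * (u * v)) := by nlinarith [e11, hDpos]
      rw [hquv, mul_one] at g
      linarith
    have F1 : 0 ≤ r * a := by
      have g : 0 ≤ (r * a) * (v⁻¹ * u⁻¹ * (u * v)) := by nlinarith [e200, hupos]
      rwa [hquv, mul_one] at g
    have F2 : 0 ≤ r * d := by
      have g : 0 ≤ (r * d) * (v⁻¹ * u⁻¹ * (u * v)) := by nlinarith [e211, hvpos]
      rwa [hquv, mul_one] at g
    have F5 : 0 ≤ b 1 := by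
      have g : 0 ≤ (b 1) * (v⁻¹ * u⁻¹ * (u * v)) := by nlinarith [e31, hvpos]
      rwa [hquv, mul_one] at g
    have F6 : r * c * b 1 ≤ v * b 0 := by
      have g : 0 ≤ (v * b 0 - r * c * b 1) * (v⁻¹ * u⁻¹ * (u * v)) := by
        nlinarith [e30, hDpos]
      rw [hquv, mul_one] at g
      linarith
    have F7 : r * (b 0 * v + b 1 * (u - r * c)) ≤ u * v := by
      have hm := mul_le_mul_of_nonneg_right ham4 hDpos.le
      have g : 0 ≤ u * v - (r * (b 0 * v + b 1 * (u - r * c))) * (v⁻¹ * u⁻¹ * (u * v)) := by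
        linarith [hm]
      rw [hquv, mul_one] at g
      linarith
    have F8 : b 0 * u + b 1 * (v + r * c) = 1 + r / 2 := by
      linear_combination (b 0) * hu + (b 1) * hv + hoc1 + r * hoc2
    have hu1 : (1:ℝ) ≤ u := by linarith [F1, hu.le, hu.ge]
    have hv1 : (1:ℝ) ≤ v := by linarith [F2, hv.le, hv.ge]
    have hb0 : b 0 = 1 - b 1 := by linarith [hoc1]
    have hub0 : u * b 0 = u - u * b 1 := by rw [hb0]; ring
    have hvb0 : v * b 0 = v - v * b 1 := by rw [hb0]; ring
    have ht1 : b 1 ≤ 1 := by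
      by_contra hcon
      push_neg at hcon
      have h1 : 0 < v * (b 1 - 1) := mul_pos hvpos (by linarith)
      have h0 : 0 ≤ r * c * b 1 := mul_nonneg F3 F5
      linarith [F6, hvb0, h1, h0]
    have P1 : (1 - b 1) * u + b 1 * v ≤ 1 + r / 2 := by
      have h0 : 0 ≤ b 1 * (r * c) := mul_nonneg F5 F3
      linarith [F8, hub0, h0]
    have P2 : 1 + r / 2 ≤ u + b 1 * v := by
      have h0 : 0 ≤ b 1 * (u - r * c) := mul_nonneg F5 (by linarith)
      linarith [F8, hub0, h0]
    have P3 : 1 + r / 2 ≤ (1 - b 1) * u + v := by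
      linarith [F8, hub0, hvb0, F6]
    have P4 : r * (u + v - 1 - r / 2) ≤ u * v := by
      have F8r : r * (b 0 * u + b 1 * (v + r * c)) = r * (1 + r / 2) := by rw [F8]
      have hub0r : r * (u * b 0) = r * u - r * (u * b 1) := by rw [hb0]; ring
      have hvb0r : r * (v * b 0) = r * v - r * (v * b 1) := by rw [hb0]; ring
      linarith [F7, F8r, hub0r, hvb0r]
    exact key_ssp u v (b 1) r hu1 hv1 F5 ht1 hr P1 P2 P3 P4
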